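/- Let L ≥ 2, c ∈ Fin 3, a ∈ ZMod L, and let R be any subset of the dual-lattice plane {p ∈ V : p_c = a}. Then for every X-error F, Σ_{p ∈ R} σ_c(F)(p) = Σ_{i ≠ c} Σ over positions q ∈ V such that exactly one of q, q − e_i lies in R of F(q, i), computed in ZMod 2. (The generalized Gauss law of the X-cube model: the total c-colored syndrome in a region R of a planar materialized symmetry equals the mod-2 sum of the error over the faces of color ≠ c lying on the boundary of R; taking R to be the whole plane recovers the planar relation.) -/

import Mathlib

/-- Positions on the periodic cubic lattice of linear size `L`. -/
abbrev V (L : ℕ) : Type := Fin 3 → ZMod L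

/-- The standard basis vector in direction `i`. -/
def e (L : ℕ) (i : Fin 3) : V L := Pi.single i 1

/-- The two directions/colors different from a given one. -/
def oth : Fin 3 → Fin 3 × Fin 3 := ![(1, 2), (0, 2), (0, 1)]

/-- The `c`-colored cell syndrome of an X-error `F` at the cell `p`. -/
def cellSyn (L : ℕ) (F : V L × Fin 3 → ZMod 2) (c : Fin 3) (p : V L) : ZMod 2 :=
  ∑ i ∈ Finset.univ.filter (fun i : Fin 3 => i ≠ c), (F (p, i) + F (p + e L i, i))

/-- The vertex syndrome of a Z-error `E` at the vertex `v`. -/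
def vertSyn (L : ℕ) (E : V L × Fin 3 → ZMod 2) (v : V L) : ZMod 2 :=
  ∑ i : Fin 3, ∑ a : Fin 2, ∑ b : Fin 2,
    E (v - ((a : ℕ) : ZMod L) • e L (oth i).1 - ((b : ℕ) : ZMod L) • e L (oth i).2, i)

lemma char2_symmdiff {α : Type*} [DecidableEq α] (A B : Finset α) (f : α → ZMod 2) :
    (∑ x ∈ symmDiff A B, f x) = ∑ x ∈ A, f x + ∑ x ∈ B, f x := by
  rw [symmDiff_def, Finset.sup_eq_union,
      Finset.sum_union (disjoint_sdiff_sdiff),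
      ← Finset.sum_inter_add_sum_sdiff A B f, ← Finset.sum_inter_add_sum_sdiff B A f,
      Finset.inter_comm B A]
  rw [add_add_add_comm, CharTwo.add_self_eq_zero, zero_add]

/-- The generalized Gauss law of the X-cube model: for any region `R` of a
dual-lattice plane of color `c`, the total `c`-colored syndrome in `R` equals
the mod-2 sum of the error over the faces of color `≠ c` on the boundary of
`R`. -/
theorem stmt_17 (L : ℕ) [NeZero L] (hL : 2 ≤ L) (c : Fin 3) (a : ZMod L)
    (R : Finset (V L)) (hR : ∀ p ∈ R, p c = a) (F : V L × Fin 3 → ZMod 2) :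
    ∑ p ∈ R, cellSyn L F c p =
      ∑ i ∈ Finset.univ.filter (fun i : Fin 3 => i ≠ c),
        ∑ q ∈ Finset.univ.filter
          (fun q : V L => Xor (q ∈ R) (q - e L i ∈ R)), F (q, i) := by
  classical
  unfold cellSyn
  rw [Finset.sum_comm]
  refine Finset.sum_congr rfl fun i _ => ?_
  have h1 : ∑ p ∈ R, F (p, i) = ∑ q ∈ Finset.univ.filter (fun q : V L => q ∈ R), F (q, i) := by
    congr 1
    ext q; simp
  have h2 : ∑ p ∈ R, F (p + e L i, i)
      = ∑ q ∈ Finset.univ.filter (fun q : V L => q - e L i ∈ R), F (q, i) := by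
    apply Finset.sum_nbij' (fun p => p + e L i) (fun q => q - e L i)
    · intro p hp; simp [hp]
    · intro q hq; simpa using hq
    · intro p _; simp
    · intro q _; simp
    · intro p _; rfl
  have hset : Finset.univ.filter (fun q : V L => Xor (q ∈ R) (q - e L i ∈ R))
      = symmDiff (Finset.univ.filter (fun q : V L => q ∈ R))
        (Finset.univ.filter (fun q : V L => q - e L i ∈ R)) := by
    ext q
    rw [Finset.mem_filter]; simp [Finset.mem_symmDiff, Xor]
  rw [Finset.sum_add_distrib, h1, h2, hset, char2_symmdiff]
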